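/- In the lattice ℤ^{1+(n+2)} (n ≥ 4) with basis l, E_1, …, E_{n+2} and the standard hyperbolic form, define for each 5 ≤ i ≤ n+2 the element w_i = r_{l-E_1-E_3-E_i} ∘ r_{l-E_2-E_4-E_i}. Then for all 5 ≤ i, j ≤ n+2, w_i and w_j commute, and the composition w_5 ∘ w_6 ∘ ⋯ ∘ w_{n+2} is an involution (has order dividing 2). -/

import Mathlib

/-- The hyperbolic form on `ℤ^{1,m}`, realized on vectors `ℕ → ℤ` supported on
coordinates `0, 1, …, m`: coordinate `0` is the class `l`, and coordinate `i`
(`1 ≤ i ≤ m`) is the class `E_i`.  It satisfies `⟨l,l⟩ = 1`, `⟨E_i,E_j⟩ = -δ_{ij}`,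
`⟨l,E_i⟩ = 0`. -/
def hypForm (m : ℕ) (x y : ℕ → ℤ) : ℤ :=
  2 * x 0 * y 0 - ∑ i ∈ Finset.range (m + 1), x i * y i

/-- The class `l` (pullback of a line). -/
def lcl : ℕ → ℤ := Pi.single 0 1

/-- The exceptional class `E_k`. -/
def Ecl (k : ℕ) : ℕ → ℤ := Pi.single k 1

/-- The reflection `r_α (β) = β + ⟨α,β⟩ α` with respect to `α` in `ℤ^{1,m}`. -/
def reflct (m : ℕ) (α β : ℕ → ℤ) : ℕ → ℤ := β + hypForm m α β • α

/- ### Auxiliary material -/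

/-- The root `l - E₁ - E₃ - E_i`. -/
def alphA (i : ℕ) : ℕ → ℤ := lcl - Ecl 1 - Ecl 3 - Ecl i

/-- The root `l - E₂ - E₄ - E_i`. -/
def alphB (i : ℕ) : ℕ → ℤ := lcl - Ecl 2 - Ecl 4 - Ecl i

/-- `⟨l-E₁-E₃-E_i, β⟩`. -/
def Afn (i : ℕ) (β : ℕ → ℤ) : ℤ := β 0 + β 1 + β 3 + β i

/-- `⟨l-E₂-E₄-E_i, β⟩`. -/
def Bfn (i : ℕ) (β : ℕ → ℤ) : ℤ := β 0 + β 2 + β 4 + β i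

/-- The map `w_i`. -/
def wfun (m i : ℕ) : (ℕ → ℤ) → (ℕ → ℤ) :=
  reflct m (lcl - Ecl 1 - Ecl 3 - Ecl i) ∘ reflct m (lcl - Ecl 2 - Ecl 4 - Ecl i)

lemma sum_single (m a : ℕ) (ha : a ≤ m) (y : ℕ → ℤ) :
    ∑ k ∈ Finset.range (m + 1), (Pi.single a 1 : ℕ → ℤ) k * y k = y a := by
  rw [Finset.sum_eq_single a]
  · simp
  · intro b _ hb
    simp [Pi.single_apply, hb]
  · intro h
    exact absurd (Finset.mem_range.mpr (by omega)) h

lemma hyp_root (m a b c : ℕ) (ha : 1 ≤ a) (hb : 1 ≤ b) (hc : 1 ≤ c)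
    (ham : a ≤ m) (hbm : b ≤ m) (hcm : c ≤ m) (y : ℕ → ℤ) :
    hypForm m (lcl - Ecl a - Ecl b - Ecl c) y = y 0 + y a + y b + y c := by
  unfold hypForm lcl Ecl
  have h0 : (Pi.single 0 1 - Pi.single a 1 - Pi.single b 1 - Pi.single c 1 : ℕ → ℤ) 0 = 1 := by
    have : ¬(0 = a) := by omega
    have : ¬(0 = b) := by omega
    have : ¬(0 = c) := by omega
    simp_all [Pi.single_apply]
  rw [h0]
  simp only [Pi.sub_apply, sub_mul, Finset.sum_sub_distrib,
    sum_single m 0 (by omega) y, sum_single m a ham y, sum_single m b hbm y,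
    sum_single m c hcm y]
  ring

lemma hyp_alphA (m i : ℕ) (h1 : 1 ≤ i) (him : i ≤ m) (hm : 4 ≤ m) (y : ℕ → ℤ) :
    hypForm m (alphA i) y = Afn i y :=
  hyp_root m 1 3 i (by omega) (by omega) h1 (by omega) (by omega) him y

lemma hyp_alphB (m i : ℕ) (h1 : 1 ≤ i) (him : i ≤ m) (hm : 4 ≤ m) (y : ℕ → ℤ) :
    hypForm m (alphB i) y = Bfn i y :=
  hyp_root m 2 4 i (by omega) (by omega) h1 (by omega) (by omega) him y

lemma alphA_apply (i k : ℕ) : alphA i k =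
    (if k = 0 then 1 else 0) - (if k = 1 then 1 else 0) - (if k = 3 then 1 else 0)
      - (if k = i then 1 else 0) := by
  simp [alphA, lcl, Ecl, Pi.single_apply]

lemma alphB_apply (i k : ℕ) : alphB i k =
    (if k = 0 then 1 else 0) - (if k = 2 then 1 else 0) - (if k = 4 then 1 else 0)
      - (if k = i then 1 else 0) := by
  simp [alphB, lcl, Ecl, Pi.single_apply]

/-- Closed form for `w_i`. -/
lemma w_eq (m i : ℕ) (h5 : 5 ≤ i) (him : i ≤ m) (β : ℕ → ℤ) :
    wfun m i β = β + Afn i β • alphA i + Bfn i β • alphB i := by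
  have hm : 4 ≤ m := by omega
  have h1 : reflct m (alphB i) β = β + Bfn i β • alphB i := by
    rw [reflct, hyp_alphB m i (by omega) him hm]
  show reflct m (alphA i) (reflct m (alphB i) β) = _
  rw [h1, reflct, hyp_alphA m i (by omega) him hm]
  have e1 : ¬(1 = i) := by omega
  have e3 : ¬(3 = i) := by omega
  have e0 : ¬(0 = i) := by omega
  have i0 : ¬(i = 0) := by omega
  have i2 : ¬(i = 2) := by omega
  have i4 : ¬(i = 4) := by omega
  have h2 : Afn i (β + Bfn i β • alphB i) = Afn i β := by
    simp only [Afn, Pi.add_apply, Pi.smul_apply, alphB_apply, smul_eq_mul]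
    norm_num [e1, e3, e0, i0, i2, i4]
    ring
  rw [h2]
  abel

set_option maxHeartbeats 1600000 in
lemma w_invol (m i : ℕ) (h5 : 5 ≤ i) (him : i ≤ m) :
    wfun m i ∘ wfun m i = id := by
  funext β
  simp only [Function.comp_apply, id_eq]
  rw [w_eq m i h5 him β, w_eq m i h5 him _]
  funext k
  have e0 : ¬(0 = i) := by omega
  have e1 : ¬(1 = i) := by omega
  have e2 : ¬(2 = i) := by omega
  have e3 : ¬(3 = i) := by omega
  have e4 : ¬(4 = i) := by omega
  have i0 : ¬(i = 0) := by omega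
  have i1 : ¬(i = 1) := by omega
  have i2 : ¬(i = 2) := by omega
  have i3 : ¬(i = 3) := by omega
  have i4 : ¬(i = 4) := by omega
  simp only [Afn, Bfn, Pi.add_apply, Pi.smul_apply, alphA_apply, alphB_apply, smul_eq_mul,
    id_eq]
  norm_num [e0, e1, e2, e3, e4, i0, i1, i2, i3, i4]
  split_ifs <;> ring

set_option maxHeartbeats 1600000 in
lemma w_comm (m i j : ℕ) (h5i : 5 ≤ i) (him : i ≤ m) (h5j : 5 ≤ j) (hjm : j ≤ m) :
    wfun m i ∘ wfun m j = wfun m j ∘ wfun m i := by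
  rcases eq_or_ne i j with rfl | hij
  · rfl
  funext β
  simp only [Function.comp_apply]
  rw [w_eq m j h5j hjm β, w_eq m i h5i him β, w_eq m i h5i him _, w_eq m j h5j hjm _]
  funext k
  have e0i : ¬(0 = i) := by omega
  have e1i : ¬(1 = i) := by omega
  have e2i : ¬(2 = i) := by omega
  have e3i : ¬(3 = i) := by omega
  have e4i : ¬(4 = i) := by omega
  have e0j : ¬(0 = j) := by omega
  have e1j : ¬(1 = j) := by omega
  have e2j : ¬(2 = j) := by omega
  have e3j : ¬(3 = j) := by omega
  have e4j : ¬(4 = j) := by omega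
  have eij : ¬(i = j) := hij
  have eji : ¬(j = i) := fun h => hij h.symm
  have i0 : ¬(i = 0) := by omega
  have i1 : ¬(i = 1) := by omega
  have i2 : ¬(i = 2) := by omega
  have i3 : ¬(i = 3) := by omega
  have i4 : ¬(i = 4) := by omega
  have j0 : ¬(j = 0) := by omega
  have j1 : ¬(j = 1) := by omega
  have j2 : ¬(j = 2) := by omega
  have j3 : ¬(j = 3) := by omega
  have j4 : ¬(j = 4) := by omega
  simp only [Afn, Bfn, Pi.add_apply, Pi.smul_apply, alphA_apply, alphB_apply, smul_eq_mul]
  norm_num [e0i, e1i, e2i, e3i, e4i, e0j, e1j, e2j, e3j, e4j, eij, eji,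
    i0, i1, i2, i3, i4, j0, j1, j2, j3, j4]
  split_ifs <;> ring

lemma foldr_comm_aux {X : Type*} (f : ℕ → X → X) (i : ℕ) (L : List ℕ)
    (h : ∀ j ∈ L, f i ∘ f j = f j ∘ f i) :
    f i ∘ L.foldr (fun t g => f t ∘ g) id = L.foldr (fun t g => f t ∘ g) id ∘ f i := by
  induction L with
  | nil => simp
  | cons a t ih =>
    simp only [List.foldr_cons]
    calc f i ∘ (f a ∘ t.foldr (fun t g => f t ∘ g) id)
        = (f i ∘ f a) ∘ t.foldr (fun t g => f t ∘ g) id := rfl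
      _ = (f a ∘ f i) ∘ t.foldr (fun t g => f t ∘ g) id := by
          rw [h a (List.mem_cons_self)]
      _ = f a ∘ (f i ∘ t.foldr (fun t g => f t ∘ g) id) := rfl
      _ = f a ∘ (t.foldr (fun t g => f t ∘ g) id ∘ f i) := by
          rw [ih (fun j hj => h j (List.mem_cons_of_mem a hj))]

lemma foldr_invol {X : Type*} (f : ℕ → X → X) (L : List ℕ)
    (hcomm : ∀ i ∈ L, ∀ j ∈ L, f i ∘ f j = f j ∘ f i)
    (hinv : ∀ i ∈ L, f i ∘ f i = id) :
    L.foldr (fun t g => f t ∘ g) id ∘ L.foldr (fun t g => f t ∘ g) id = id := by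
  induction L with
  | nil => simp
  | cons a t ih =>
    simp only [List.foldr_cons]
    have hswap : f a ∘ t.foldr (fun t g => f t ∘ g) id
        = t.foldr (fun t g => f t ∘ g) id ∘ f a :=
      foldr_comm_aux f a t (fun j hj =>
        hcomm a (List.mem_cons_self) j (List.mem_cons_of_mem a hj))
    have iht := ih
      (fun i hi j hj => hcomm i (List.mem_cons_of_mem a hi) j (List.mem_cons_of_mem a hj))
      (fun i hi => hinv i (List.mem_cons_of_mem a hi))
    calc (f a ∘ t.foldr (fun t g => f t ∘ g) id) ∘ (f a ∘ t.foldr (fun t g => f t ∘ g) id)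
        = f a ∘ (t.foldr (fun t g => f t ∘ g) id ∘ f a) ∘ t.foldr (fun t g => f t ∘ g) id :=
          rfl
      _ = f a ∘ (f a ∘ t.foldr (fun t g => f t ∘ g) id) ∘ t.foldr (fun t g => f t ∘ g) id := by
          rw [hswap]
      _ = (f a ∘ f a) ∘ (t.foldr (fun t g => f t ∘ g) id ∘ t.foldr (fun t g => f t ∘ g) id) :=
          rfl
      _ = id := by rw [hinv a (List.mem_cons_self), iht]; rfl

/-- In `ℤ^{1,n+2}` (`n ≥ 4`), for `5 ≤ i ≤ n+2` set
`w_i = r_{l-E₁-E₃-E_i} ∘ r_{l-E₂-E₄-E_i}`.  Then all the `w_i` pairwise commute, and the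
composition `w₅ ∘ w₆ ∘ ⋯ ∘ w_{n+2}` is an involution. -/
theorem wD_commute_and_involution (n : ℕ) (hn : 4 ≤ n) :
    let w : ℕ → (ℕ → ℤ) → (ℕ → ℤ) := fun i =>
      reflct (n + 2) (lcl - Ecl 1 - Ecl 3 - Ecl i) ∘
        reflct (n + 2) (lcl - Ecl 2 - Ecl 4 - Ecl i)
    (∀ i j : ℕ, 5 ≤ i → i ≤ n + 2 → 5 ≤ j → j ≤ n + 2 → w i ∘ w j = w j ∘ w i) ∧
    (((List.range (n - 2)).map (fun t => t + 5)).foldr (fun i f => w i ∘ f) id) ∘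
      (((List.range (n - 2)).map (fun t => t + 5)).foldr (fun i f => w i ∘ f) id) = id := by
  intro w
  have hw : w = fun i => wfun (n + 2) i := rfl
  constructor
  · intro i j hi hin hj hjn
    rw [hw]
    exact w_comm (n + 2) i j hi hin hj hjn
  · rw [hw]
    have hmem : ∀ i ∈ (List.range (n - 2)).map (fun t => t + 5), 5 ≤ i ∧ i ≤ n + 2 := by
      intro i hi
      simp only [List.mem_map, List.mem_range] at hi
      obtain ⟨t, ht, rfl⟩ := hi
      omega
    exact foldr_invol (wfun (n + 2)) _
      (fun i hi j hj => w_comm (n + 2) i j (hmem i hi).1 (hmem i hi).2 (hmem j hj).1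
        (hmem j hj).2)
      (fun i hi => w_invol (n + 2) i (hmem i hi).1 (hmem i hi).2)
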